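/- Let n ≥ 1, let A be the n×n prefix-sum matrix, and let C_diag be the n×n diagonal matrix with j-th diagonal entry (n − j + 1)^{1/4} for j = 1,…,n. Then the full-batch RMSE of the factorization A = (A C_diag^{-1}) C_diag equals (1/√n) ∑_{j=1}^{n} √j; that is, (1/√n) · ‖A C_diag^{-1}‖_F · ‖C_diag e‖₂ = (1/√n) ∑_{j=1}^{n} √j, asymptotically equivalent to 2n/3. -/

import Mathlib

open Finset

/-- Euclidean norm of a vector in `ℝⁿ`. -/
noncomputable def norm2 {n : ℕ} (v : Fin n → ℝ) : ℝ := Real.sqrt (∑ i, v i ^ 2)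

/-- Frobenius norm of a square matrix. -/
noncomputable def frob {n : ℕ} (B : Matrix (Fin n) (Fin n) ℝ) : ℝ :=
  Real.sqrt (∑ i, ∑ j, B i j ^ 2)

/-- `‖B‖_{2→∞}`: the maximum Euclidean norm of a row of `B`. -/
noncomputable def rowMax {n : ℕ} (B : Matrix (Fin n) (Fin n) ℝ) : ℝ :=
  ⨆ i : Fin n, norm2 (fun j => B i j)

/-- The `n × n` prefix-sum matrix: lower triangular, all entries on or below the diagonal are 1. -/
def Amat (n : ℕ) : Matrix (Fin n) (Fin n) ℝ :=
  fun i j => if (j : ℕ) ≤ (i : ℕ) then 1 else 0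

/-- The DP-λCGD strategy matrix `C_λ`: lower triangular Toeplitz with `(C_λ)_{ij} = λ^{i-j}`. -/
noncomputable def Cmat (n : ℕ) (l : ℝ) : Matrix (Fin n) (Fin n) ℝ :=
  fun i j => if (j : ℕ) ≤ (i : ℕ) then l ^ ((i : ℕ) - (j : ℕ)) else 0

/-- The inverse `C_λ⁻¹`: ones on the diagonal, `-λ` on the first subdiagonal, zero elsewhere. -/
noncomputable def Cinvmat (n : ℕ) (l : ℝ) : Matrix (Fin n) (Fin n) ℝ :=
  fun i j => if (i : ℕ) = (j : ℕ) then 1 else if (i : ℕ) = (j : ℕ) + 1 then -l else 0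

/-- `sens_{k,b}(C)`: Euclidean norm of `∑_{j=0}^{k-1} C_{:,jb+1}` (columns 1-indexed, so the
column of 1-based index `j*b + 1` is the column of `Fin`-index `j*b`). -/
noncomputable def sens (n k b : ℕ) (C : Matrix (Fin n) (Fin n) ℝ) : ℝ :=
  norm2 (fun i => ∑ j ∈ Finset.range k, if h : j * b < n then C i ⟨j * b, h⟩ else 0)

/-- `d_j`: Euclidean norm of the `j`-th column of `C_λ`. -/
noncomputable def dcol (n : ℕ) (l : ℝ) (j : Fin n) : ℝ :=
  norm2 (fun i => Cmat n l i j)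

/-- The column-normalized DP-λCGD strategy matrix `C̃ = C_λ D⁻¹`. -/
noncomputable def Ctil (n : ℕ) (l : ℝ) : Matrix (Fin n) (Fin n) ℝ :=
  Cmat n l * (Matrix.diagonal (dcol n l))⁻¹

/-- The optimal diagonal strategy matrix with j-th diagonal entry (n − j + 1)^{1/4}
(1-indexed; with Fin-index j this is (n − j)^{1/4}). -/
noncomputable def Cdiag (n : ℕ) : Matrix (Fin n) (Fin n) ℝ :=
  Matrix.diagonal (fun j : Fin n => ((n - (j : ℕ) : ℕ) : ℝ) ^ ((1 : ℝ) / 4))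


-- key algebraic inequality
lemma cube_ineq {x y : ℝ} (hx : 0 ≤ x) (hxy : x ≤ y) :
    (3/2) * (y^2 - x^2) * x ≤ y^3 - x^3 ∧ y^3 - x^3 ≤ (3/2) * (y^2 - x^2) * y := by
  constructor <;> nlinarith [sq_nonneg (y - x), sq_nonneg (y + x)]

lemma sum_sqrt_bounds (n : ℕ) :
    (2/3) * ((n:ℝ) * Real.sqrt n) ≤ (∑ j ∈ Finset.Icc 1 n, Real.sqrt j) ∧
    (∑ j ∈ Finset.Icc 1 n, Real.sqrt j) ≤ (2/3) * ((n:ℝ) * Real.sqrt n) + Real.sqrt n := by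
  induction n with
  | zero => simp
  | succ n ih =>
    have hsum : (∑ j ∈ Finset.Icc 1 (n+1), Real.sqrt j)
        = (∑ j ∈ Finset.Icc 1 n, Real.sqrt j) + Real.sqrt (n+1) := by
      rw [Finset.sum_Icc_succ_top (by omega)]
      norm_num
    set x := Real.sqrt n with hx
    set y := Real.sqrt (n+1) with hy
    have hx0 : 0 ≤ x := Real.sqrt_nonneg _
    have hy0 : 0 ≤ y := Real.sqrt_nonneg _
    have hxy : x ≤ y := Real.sqrt_le_sqrt (by push_cast; linarith)
    have hx2 : x^2 = n := Real.sq_sqrt (by positivity)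
    have hy2 : y^2 = (n:ℝ)+1 := by
      rw [hy]; rw [Real.sq_sqrt (by positivity)]
    have hkey := cube_ineq hx0 hxy
    have hd : y^2 - x^2 = 1 := by rw [hx2, hy2]; ring
    rw [hd] at hkey
    constructor
    · rw [hsum]
      push_cast
      nlinarith [ih.1, hkey.2, hx2, hy2]
    · rw [hsum]
      push_cast
      nlinarith [ih.2, hkey.1, hx2, hy2]

lemma tendsto_part :
    Filter.Tendsto
      (fun n : ℕ => ((1 / Real.sqrt n) * ∑ j ∈ Finset.Icc 1 n, Real.sqrt j) /
        (2 * (n : ℝ) / 3))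
      Filter.atTop (nhds 1) := by
  apply tendsto_of_tendsto_of_tendsto_of_le_of_le' (g := fun _ : ℕ => (1:ℝ))
      (h := fun n : ℕ => 1 + (3/2) / (n:ℝ))
  · exact tendsto_const_nhds
  · have := (tendsto_const_div_atTop_nhds_zero_nat (3/2 : ℝ)).const_add 1
    simpa using this
  · filter_upwards [Filter.eventually_ge_atTop 1] with n hn
    have hn0 : (0:ℝ) < n := by exact_mod_cast hn
    have hs : (0:ℝ) < Real.sqrt n := Real.sqrt_pos.mpr hn0
    have h1 := (sum_sqrt_bounds n).1
    rw [one_le_div (by positivity), div_mul_eq_mul_div, one_mul, le_div_iff₀ hs]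
    calc 2 * (n:ℝ) / 3 * Real.sqrt n = (2/3) * ((n:ℝ) * Real.sqrt n) := by ring
    _ ≤ _ := h1
  · filter_upwards [Filter.eventually_ge_atTop 1] with n hn
    have hn0 : (0:ℝ) < n := by exact_mod_cast hn
    have hs : (0:ℝ) < Real.sqrt n := Real.sqrt_pos.mpr hn0
    have h2 := (sum_sqrt_bounds n).2
    rw [div_le_iff₀ (by positivity), div_mul_eq_mul_div, one_mul, div_le_iff₀ hs]
    have hss : Real.sqrt n * Real.sqrt n = n := Real.mul_self_sqrt (le_of_lt hn0)
    calc (∑ j ∈ Finset.Icc 1 n, Real.sqrt j)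
        ≤ (2/3) * ((n:ℝ) * Real.sqrt n) + Real.sqrt n := h2
    _ = (1 + 3/2/(n:ℝ)) * (2 * n / 3) * Real.sqrt n := by field_simp

lemma rpow_aux {t : ℝ} (ht : 0 < t) :
    t * ((t ^ ((1:ℝ)/4))⁻¹)^2 = Real.sqrt t ∧ (t ^ ((1:ℝ)/4))^2 = Real.sqrt t := by
  have h1 : (t ^ ((1:ℝ)/4))⁻¹ = t ^ (-(1/4) : ℝ) := (Real.rpow_neg ht.le _).symm
  constructor
  · rw [h1, ← Real.rpow_natCast (t ^ (-(1/4):ℝ)) 2, ← Real.rpow_mul ht.le]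
    nth_rewrite 1 [← Real.rpow_one t]
    rw [← Real.rpow_add ht, Real.sqrt_eq_rpow]
    norm_num
  · rw [← Real.rpow_natCast (t ^ ((1/4):ℝ)) 2, ← Real.rpow_mul ht.le, Real.sqrt_eq_rpow]
    norm_num

lemma reindex_sum (n : ℕ) :
    ∑ j : Fin n, Real.sqrt ((n - (j:ℕ) : ℕ) : ℝ) = ∑ j ∈ Finset.Icc 1 n, Real.sqrt j := by
  rw [Fin.sum_univ_eq_sum_range (fun j => Real.sqrt ((n - j : ℕ) : ℝ)) n]
  rw [← Finset.Ico_add_one_right_eq_Icc, Finset.sum_Ico_eq_sum_range]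
  rw [← Finset.sum_range_reflect (fun j => Real.sqrt ((n - j : ℕ) : ℝ)) n]
  apply Finset.sum_congr (by norm_num)
  intro j hj
  rw [Finset.mem_range] at hj
  congr 2
  omega

lemma part1 (n : ℕ) (hn : 1 ≤ n) :
    (1 / Real.sqrt n) * frob (Amat n * (Cdiag n)⁻¹) *
        norm2 ((Cdiag n).mulVec (fun _ => 1)) =
      (1 / Real.sqrt n) * ∑ j ∈ Finset.Icc 1 n, Real.sqrt j := by
  set d : Fin n → ℝ := fun j : Fin n => ((n - (j : ℕ) : ℕ) : ℝ) ^ ((1 : ℝ) / 4) with hd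
  have hm : ∀ j : Fin n, (0:ℝ) < ((n - (j:ℕ) : ℕ) : ℝ) := by
    intro j; exact_mod_cast Nat.sub_pos_of_lt j.isLt
  have hd0 : ∀ j : Fin n, d j ≠ 0 := fun j => by
    have := hm j; positivity
  -- inverse of Cdiag
  have hinv : (Cdiag n)⁻¹ = Matrix.diagonal (fun j => (d j)⁻¹) := by
    apply Matrix.inv_eq_right_inv
    rw [Cdiag, Matrix.diagonal_mul_diagonal]
    rw [show (fun j : Fin n => d j * (d j)⁻¹) = fun _ => 1 from funext fun j => mul_inv_cancel₀ (hd0 j)]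
    exact Matrix.diagonal_one
  set T := ∑ j ∈ Finset.Icc 1 n, Real.sqrt j with hT
  have hT0 : 0 ≤ T := Finset.sum_nonneg fun j _ => Real.sqrt_nonneg _
  -- frobenius norm
  have hfrob : frob (Amat n * (Cdiag n)⁻¹) = Real.sqrt T := by
    rw [hinv, frob]
    congr 1
    rw [Finset.sum_comm]
    rw [hT, ← reindex_sum n]
    apply Finset.sum_congr rfl
    intro j _
    have hcount : ∀ i : Fin n, (Amat n * Matrix.diagonal (fun j => (d j)⁻¹)) i j ^ 2
        = if (j:ℕ) ≤ (i:ℕ) then ((d j)⁻¹)^2 else 0 := by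
      intro i
      rw [Matrix.mul_diagonal, Amat]
      by_cases h : (j:ℕ) ≤ (i:ℕ) <;> simp [h]
    simp only [hcount]
    rw [Fin.sum_univ_eq_sum_range (fun i => if (j:ℕ) ≤ i then ((d j)⁻¹)^2 else 0) n]
    rw [← Finset.sum_filter]
    rw [show (Finset.range n).filter (fun i => (j:ℕ) ≤ i) = Finset.Ico (j:ℕ) n by
      ext i; simp [Finset.mem_filter, Finset.mem_range, Finset.mem_Ico]; omega]
    rw [Finset.sum_const, Nat.card_Ico, nsmul_eq_mul]
    have := (rpow_aux (hm j)).1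
    rw [hd]
    simpa using this
  -- norm of Cdiag e
  have hnorm : norm2 ((Cdiag n).mulVec (fun _ => 1)) = Real.sqrt T := by
    rw [norm2]
    congr 1
    rw [hT, ← reindex_sum n]
    apply Finset.sum_congr rfl
    intro j _
    rw [Cdiag, Matrix.mulVec_diagonal, mul_one]
    exact (rpow_aux (hm j)).2
  rw [hfrob, hnorm, mul_assoc, Real.mul_self_sqrt hT0]

/-- the full-batch RMSE of the factorization A = (A C_diag⁻¹) C_diag equals
(1/√n) ∑_{j=1}^{n} √j, which is asymptotically equivalent to 2n/3. -/
theorem stmt_7 :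
    (∀ n : ℕ, 1 ≤ n →
      (1 / Real.sqrt n) * frob (Amat n * (Cdiag n)⁻¹) *
        norm2 ((Cdiag n).mulVec (fun _ => 1)) =
      (1 / Real.sqrt n) * ∑ j ∈ Finset.Icc 1 n, Real.sqrt j) ∧
    Filter.Tendsto
      (fun n : ℕ => ((1 / Real.sqrt n) * ∑ j ∈ Finset.Icc 1 n, Real.sqrt j) /
        (2 * (n : ℝ) / 3))
      Filter.atTop (nhds 1) := by
  exact ⟨fun n hn => part1 n hn, tendsto_part⟩
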